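/- Let T > 0, C > 0, C* > 0 be reals, μ̃ a real number, and k a positive integer with 2k + μ̃ > 3. Then there exist h₀ ∈ (0,1] and C̃ > 0, depending only on T, C, C*, k, μ̃, such that the following holds: for every h ∈ (0, h₀] and every differentiable function y : [0,T] → [0,∞) satisfying y(0) ≤ C h^{2k+μ̃} and y′(t) ≤ C* y(t) + C h^{2k+μ̃} + C h^{−3/2} y(t)^{3/2} for all t ∈ [0,T], one has y(t) ≤ C̃ h^{2k+μ̃} for all t ∈ [0,T]. -/

import Mathlib

open Polynomial Set

noncomputable section

namespace FW

variable {N : ℕ}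

/-- Minus trace `ω⁻` at interface `j+1/2` (right end of cell `j`). -/
def trM (x : Fin (N + 1) → ℝ) (ω : Fin N → Polynomial ℝ) (j : Fin N) : ℝ :=
  (ω j).eval (x j.succ)

/-- Plus trace `ω⁺` at interface `j+1/2` (left end of the next cell, cyclically). -/
def trP [NeZero N] (x : Fin (N + 1) → ℝ) (ω : Fin N → Polynomial ℝ) (j : Fin N) : ℝ :=
  (ω (j + 1)).eval (x (j + 1).castSucc)

/-- Average trace `{ω}`. -/
def trA [NeZero N] (x : Fin (N + 1) → ℝ) (ω : Fin N → Polynomial ℝ) (j : Fin N) : ℝ :=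
  (trP x ω j + trM x ω j) / 2

/-- Jump `[ω]`. -/
def jmp [NeZero N] (x : Fin (N + 1) → ℝ) (ω : Fin N → Polynomial ℝ) (j : Fin N) : ℝ :=
  trP x ω j - trM x ω j

/-- Cell L² pairing `(u, φ)_{I_j}` of a piecewise polynomial with a test polynomial. -/
def ipj (x : Fin (N + 1) → ℝ) (u : Fin N → Polynomial ℝ) (j : Fin N) (φ : Polynomial ℝ) : ℝ :=
  ∫ t in (x j.castSucc)..(x j.succ), (u j).eval t * φ.eval t

/-- Cell pairing `(f∘u, φ)_{I_j}`. -/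
def ipfj (x : Fin (N + 1) → ℝ) (f : ℝ → ℝ) (u : Fin N → Polynomial ℝ) (j : Fin N)
    (φ : Polynomial ℝ) : ℝ :=
  ∫ t in (x j.castSucc)..(x j.succ), f ((u j).eval t) * φ.eval t

/-- Boundary pairing `⟨g, φ⟩_{I_j}` for interface values `g`. -/
def bdj [NeZero N] (x : Fin (N + 1) → ℝ) (g : Fin N → ℝ) (j : Fin N) (φ : Polynomial ℝ) : ℝ :=
  g j * φ.eval (x j.succ) - g (j - 1) * φ.eval (x j.castSucc)

/-- Membership in the space `V_h^k` of piecewise polynomials of degree at most `k`. -/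
def memV (k : ℕ) (ω : Fin N → Polynomial ℝ) : Prop :=
  ∀ j, (ω j).degree ≤ (k : WithBot ℕ)

/-- `L⁻(ω, φ)`. -/
def Lm [NeZero N] (x : Fin (N + 1) → ℝ) (ω φ : Fin N → Polynomial ℝ) : ℝ :=
  ∑ j, (-(ipj x ω j (derivative (φ j))) + bdj x (trM x ω) j (φ j))

/-- `L⁺(ω, φ)`. -/
def Lp [NeZero N] (x : Fin (N + 1) → ℝ) (ω φ : Fin N → Polynomial ℝ) : ℝ :=
  ∑ j, (-(ipj x ω j (derivative (φ j))) + bdj x (trP x ω) j (φ j))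

/-- `L^c(ω, φ)`. -/
def Lc [NeZero N] (x : Fin (N + 1) → ℝ) (ω φ : Fin N → Polynomial ℝ) : ℝ :=
  ∑ j, (-(ipj x ω j (derivative (φ j))) + bdj x (trA x ω) j (φ j))

/-- Godunov numerical flux. -/
def godunov (f : ℝ → ℝ) (c d : ℝ) : ℝ :=
  if c < d then sInf (f '' Set.Icc c d) else sSup (f '' Set.Icc d c)

/-- Conservative numerical flux for `f(u) = u^p/p`, `F(u) = u^(p+1)/(p(p+1))`. -/
def consFlux (p : ℕ) (c d : ℝ) : ℝ :=
  if c = d then c ^ p / (p : ℝ)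
  else (d ^ (p + 1) / ((p : ℝ) * ((p : ℝ) + 1)) - c ^ (p + 1) / ((p : ℝ) * ((p : ℝ) + 1))) / (d - c)

/-- Dissipative (Godunov-flux) nonlinear form `N^d`. -/
def Nd [NeZero N] (x : Fin (N + 1) → ℝ) (f : ℝ → ℝ) (ω φ : Fin N → Polynomial ℝ) : ℝ :=
  ∑ j, (-(ipfj x f ω j (derivative (φ j)))
    + bdj x (fun i => godunov f (trM x ω i) (trP x ω i)) j (φ j))

/-- Conservative-flux nonlinear form `N^c`. -/
def Nc [NeZero N] (x : Fin (N + 1) → ℝ) (p : ℕ) (ω φ : Fin N → Polynomial ℝ) : ℝ :=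
  ∑ j, (-(ipfj x (fun w => w ^ p / (p : ℝ)) ω j (derivative (φ j)))
    + bdj x (fun i => consFlux p (trM x ω i) (trP x ω i)) j (φ j))

end FW

open Filter Topology in
lemma aux_slope {y : ℝ → ℝ} {T : ℝ} (hy : DifferentiableOn ℝ y (Icc 0 T)) {x : ℝ}
    (hx0 : 0 ≤ x) (hxT : x < T) :
    ∀ r, derivWithin y (Icc 0 T) x < r →
      ∃ᶠ z in 𝓝[>] x, (z - x)⁻¹ * (y z - y x) < r := by
  intro r hr
  have hd : HasDerivWithinAt y (derivWithin y (Icc 0 T) x) (Icc 0 T) x :=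
    (hy x ⟨hx0, hxT.le⟩).hasDerivWithinAt
  have ht : Tendsto (slope y x) (𝓝[Icc 0 T \ {x}] x) (𝓝 (derivWithin y (Icc 0 T) x)) :=
    hasDerivWithinAt_iff_tendsto_slope.1 hd
  have hmem : Icc (0:ℝ) T \ {x} ∈ 𝓝[>] x := by
    apply mem_of_superset (Ioc_mem_nhdsGT_of_mem ⟨le_refl x, hxT⟩)
    rintro z ⟨hz1, hz2⟩
    exact ⟨⟨hx0.trans hz1.le, hz2⟩, ne_of_gt hz1⟩
  have hle : 𝓝[>] x ≤ 𝓝[Icc 0 T \ {x}] x := nhdsWithin_le_of_mem hmem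
  have hev := (ht.mono_left hle).eventually_lt_const hr
  apply hev.frequently.mono
  intro z hz
  rwa [slope_def_field, div_eq_inv_mul] at hz

open Filter Topology in
lemma aux_gronwall {T C Cs α : ℝ} (hC : 0 < C) (hCs : 0 < Cs) {h : ℝ} (hh : 0 < h)
    {y : ℝ → ℝ} (hy : DifferentiableOn ℝ y (Icc 0 T))
    (hy0 : y 0 ≤ C * h ^ α) {b : ℝ} (hb : b ∈ Icc 0 T)
    (hbound : ∀ x ∈ Ico 0 b, derivWithin y (Icc 0 T) x ≤ (Cs + 1) * y x + C * h ^ α) :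
    ∀ x ∈ Icc 0 b, y x ≤ 2 * C * h ^ α * Real.exp ((Cs + 1) * T) := by
  have hK : (0:ℝ) < Cs + 1 := by linarith
  have hδ : (0:ℝ) < C * h ^ α := by positivity
  have hG := le_gronwallBound_of_liminf_deriv_right_le
    (f := y) (f' := derivWithin y (Icc 0 T)) (δ := C * h ^ α) (K := Cs + 1) (ε := C * h ^ α)
    (a := 0) (b := b)
    (hy.continuousOn.mono (Icc_subset_Icc le_rfl hb.2))
    (fun x hx => aux_slope hy hx.1 (hx.2.trans_le hb.2)) hy0 hbound
  intro x hx
  refine (hG x hx).trans ?_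
  rw [gronwallBound_of_K_ne_0 hK.ne']
  have hxT : x ≤ T := hx.2.trans hb.2
  have h0x : 0 ≤ x := hx.1
  have he : Real.exp ((Cs + 1) * (x - 0)) ≤ Real.exp ((Cs + 1) * T) := by
    apply Real.exp_le_exp.2
    nlinarith
  have hepos : 0 < Real.exp ((Cs + 1) * (x - 0)) := Real.exp_pos _
  have hdiv : C * h ^ α / (Cs + 1) ≤ C * h ^ α := by
    rw [div_le_iff₀ hK]; nlinarith
  have hdivpos : 0 < C * h ^ α / (Cs + 1) := by positivity
  nlinarith [Real.exp_pos ((Cs + 1) * T)]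

open Filter Topology in
theorem stmt14 (T C Cs μ : ℝ) (hT : 0 < T) (hC : 0 < C) (hCs : 0 < Cs)
    (k : ℕ) (hk : 0 < k) (hkμ : 3 < 2 * (k : ℝ) + μ) :
    ∃ h₀ : ℝ, h₀ ∈ Set.Ioc (0:ℝ) 1 ∧ ∃ Ct : ℝ, 0 < Ct ∧
      ∀ h : ℝ, h ∈ Set.Ioc (0:ℝ) h₀ →
      ∀ y : ℝ → ℝ, DifferentiableOn ℝ y (Set.Icc 0 T) →
        (∀ t ∈ Set.Icc (0:ℝ) T, 0 ≤ y t) →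
        y 0 ≤ C * h ^ (2 * (k : ℝ) + μ) →
        (∀ t ∈ Set.Icc (0:ℝ) T, derivWithin y (Set.Icc 0 T) t ≤
          Cs * y t + C * h ^ (2 * (k : ℝ) + μ)
            + C * h ^ (-(3/2) : ℝ) * (y t) ^ ((3:ℝ)/2)) →
        ∀ t ∈ Set.Icc (0:ℝ) T, y t ≤ Ct * h ^ (2 * (k : ℝ) + μ) := by
  set α : ℝ := 2 * (k : ℝ) + μ with hαdef
  have hα3 : 3 < α := hkμ
  set K : ℝ := Cs + 1 with hKdef
  have hK : (0:ℝ) < K := by positivity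
  set Ct : ℝ := 4 * C * Real.exp (K * T) with hCtdef
  have hCt : 0 < Ct := by positivity
  set B : ℝ := C * Ct ^ ((1:ℝ)/2) with hBdef
  have hB : 0 < B := by positivity
  set e : ℝ := (α - 3) / 2 with hedef
  have he : 0 < e := by simp only [hedef]; linarith
  refine ⟨min 1 (B⁻¹ ^ ((2:ℝ)/(α - 3))), ⟨lt_min one_pos (by positivity), min_le_left _ _⟩,
    Ct, hCt, ?_⟩
  intro h hh y hy hysgn hy0 hbound
  have hhpos : 0 < h := hh.1
  have hhα : 0 < h ^ α := Real.rpow_pos_of_pos hhpos α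
  -- Fact F1 : B * h ^ e ≤ 1
  have F1 : B * h ^ e ≤ 1 := by
    have h1 : h ^ e ≤ (B⁻¹ ^ ((2:ℝ)/(α - 3))) ^ e :=
      Real.rpow_le_rpow hhpos.le (hh.2.trans (min_le_right _ _)) he.le
    have h2 : (B⁻¹ ^ ((2:ℝ)/(α - 3))) ^ e = B⁻¹ := by
      rw [← Real.rpow_mul (by positivity)]
      rw [show (2:ℝ)/(α - 3) * e = 1 by
        have h3 : (0:ℝ) < α - 3 := by linarith
        simp only [hedef]
        field_simp]
      exact Real.rpow_one _
    rw [h2] at h1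
    calc B * h ^ e ≤ B * B⁻¹ := by
          exact mul_le_mul_of_nonneg_left h1 hB.le
      _ = 1 := mul_inv_cancel₀ hB.ne'
  set M : ℝ := Ct * h ^ α with hMdef
  have hM : 0 < M := by positivity
  -- F2: linearization under the bootstrap assumption
  have F2 : ∀ s ∈ Icc (0:ℝ) T, y s ≤ M →
      derivWithin y (Icc 0 T) s ≤ K * y s + C * h ^ α := by
    intro s hs hsM
    have hys : 0 ≤ y s := hysgn s hs
    have key : C * h ^ (-(3/2) : ℝ) * (y s) ^ ((3:ℝ)/2) ≤ y s := by
      rcases eq_or_lt_of_le hys with h0 | hpos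
      · rw [← h0, Real.zero_rpow (by norm_num : ((3:ℝ)/2) ≠ 0), mul_zero]
      · have hsplit : (y s) ^ ((3:ℝ)/2) = (y s) ^ ((1:ℝ)/2) * y s := by
          rw [show (3:ℝ)/2 = 1/2 + 1 by norm_num, Real.rpow_add hpos, Real.rpow_one]
        have hP : (y s) ^ ((1:ℝ)/2) ≤ Ct ^ ((1:ℝ)/2) * h ^ (α * (1/2)) := by
          have := Real.rpow_le_rpow hys hsM (by norm_num : (0:ℝ) ≤ 1/2)
          rwa [hMdef, Real.mul_rpow hCt.le hhα.le, ← Real.rpow_mul hhpos.le] at this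
        have hexp : h ^ (-(3/2) : ℝ) * h ^ (α * (1/2)) = h ^ e := by
          rw [← Real.rpow_add hhpos]
          congr 1
          simp only [hedef]; ring
        have hQ : C * h ^ (-(3/2) : ℝ) * (Ct ^ ((1:ℝ)/2) * h ^ (α * (1/2))) = B * h ^ e := by
          rw [hBdef, ← hexp]; ring
        have h1 : (y s) ^ ((1:ℝ)/2) * y s ≤ (Ct ^ ((1:ℝ)/2) * h ^ (α * (1/2))) * y s :=
          mul_le_mul_of_nonneg_right hP hys
        have h2 : C * h ^ (-(3/2) : ℝ) * ((y s) ^ ((1:ℝ)/2) * y s) ≤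
            C * h ^ (-(3/2) : ℝ) * ((Ct ^ ((1:ℝ)/2) * h ^ (α * (1/2))) * y s) :=
          mul_le_mul_of_nonneg_left h1 (by positivity)
        have h3 : C * h ^ (-(3/2) : ℝ) * ((Ct ^ ((1:ℝ)/2) * h ^ (α * (1/2))) * y s)
            = (B * h ^ e) * y s := by rw [← hQ]; ring
        have h4 : (B * h ^ e) * y s ≤ 1 * y s := mul_le_mul_of_nonneg_right F1 hys
        rw [hsplit]
        calc C * h ^ (-(3/2) : ℝ) * ((y s) ^ ((1:ℝ)/2) * y s)
            ≤ (B * h ^ e) * y s := by rw [← h3]; exact h2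
          _ ≤ 1 * y s := h4
          _ = y s := one_mul _
    have := hbound s hs
    simp only [hKdef]
    linarith
  -- bootstrap set
  set A : Set ℝ := {t | t ∈ Icc (0:ℝ) T ∧ ∀ s ∈ Icc (0:ℝ) t, y s ≤ M} with hAdef
  have hCle : C * h ^ α ≤ M := by
    have h1 : (1:ℝ) ≤ Real.exp (K * T) := Real.one_le_exp (by positivity)
    simp only [hMdef, hCtdef]
    nlinarith [mul_le_mul_of_nonneg_left h1 (le_of_lt (mul_pos hC hhα))]
  have h0A : (0:ℝ) ∈ A := by
    refine ⟨⟨le_rfl, hT.le⟩, fun s hs => ?_⟩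
    have : s = 0 := le_antisymm hs.2 hs.1
    rw [this]
    exact hy0.trans hCle
  have hAne : A.Nonempty := ⟨0, h0A⟩
  have hbddA : BddAbove A := ⟨T, fun t ht => ht.1.2⟩
  set ts : ℝ := sSup A with htsdef
  have hts0 : 0 ≤ ts := le_csSup hbddA h0A
  have htsT : ts ≤ T := csSup_le hAne fun t ht => ht.1.2
  have hMts : ∀ s ∈ Icc (0:ℝ) ts, y s ≤ M := by
    have hlt : ∀ s, 0 ≤ s → s < ts → y s ≤ M := by
      intro s hs0 hslt
      obtain ⟨t, htA, hst⟩ := exists_lt_of_lt_csSup hAne hslt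
      exact htA.2 s ⟨hs0, hst.le⟩
    intro s hs
    rcases eq_or_lt_of_le hs.2 with heq | hslt
    · by_cases hs0 : s = 0
      · rw [hs0]; exact h0A.2 0 ⟨le_rfl, le_rfl⟩
      · have htspos : 0 < ts := heq ▸ lt_of_le_of_ne hs.1 (Ne.symm hs0)
        have hc : ContinuousWithinAt y (Icc 0 T) ts :=
          hy.continuousOn.continuousWithinAt ⟨hts0, htsT⟩
        have hsub : Ico (0:ℝ) ts ⊆ Icc 0 T := fun z hz => ⟨hz.1, hz.2.le.trans htsT⟩
        have htend : Tendsto y (𝓝[Ico (0:ℝ) ts] ts) (𝓝 (y ts)) := hc.mono hsub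
        have hne : (𝓝[Ico (0:ℝ) ts] ts).NeBot := by
          rw [nhdsWithin_Ico_eq_nhdsLT htspos]
          infer_instance
        have hev : ∀ᶠ z in 𝓝[Ico (0:ℝ) ts] ts, y z ≤ M :=
          eventually_nhdsWithin_of_forall fun z hz => hlt z hz.1 hz.2
        have := le_of_tendsto htend hev
        rw [heq]; exact this
    · exact hlt s hs.1 hslt
  have hhalf : ∀ x ∈ Icc (0:ℝ) ts, y x ≤ 2 * C * h ^ α * Real.exp (K * T) := by
    apply aux_gronwall hC hCs hhpos hy hy0 ⟨hts0, htsT⟩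
    intro x hx
    exact F2 x ⟨hx.1, hx.2.le.trans htsT⟩ (hMts x ⟨hx.1, hx.2.le⟩)
  have hltM : 2 * C * h ^ α * Real.exp (K * T) < M := by
    simp only [hMdef, hCtdef]
    nlinarith [Real.exp_pos (K * T)]
  have htseq : ts = T := by
    by_contra hne'
    have htslt : ts < T := lt_of_le_of_ne htsT hne'
    have hytsM : y ts < M := (hhalf ts ⟨hts0, le_rfl⟩).trans_lt hltM
    have hc : ContinuousWithinAt y (Icc 0 T) ts :=
      hy.continuousOn.continuousWithinAt ⟨hts0, htsT⟩
    have htend : Tendsto y (𝓝[Icc ts T] ts) (𝓝 (y ts)) :=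
      hc.mono (Icc_subset_Icc hts0 le_rfl)
    rw [nhdsWithin_Icc_eq_nhdsGE htslt] at htend
    have hev : ∀ᶠ z in 𝓝[Ici ts] ts, y z < M := htend.eventually_lt_const hytsM
    obtain ⟨u, hu, hsub⟩ := mem_nhdsGE_iff_exists_Icc_subset.1 hev
    have hcA : min u T ∈ A := by
      have htslt' : ts < min u T := lt_min hu htslt
      refine ⟨⟨hts0.trans htslt'.le, min_le_right _ _⟩, fun s hs => ?_⟩
      rcases le_or_gt s ts with hsts | hsts
      · exact hMts s ⟨hs.1, hsts⟩
      · exact (hsub ⟨hsts.le, hs.2.trans (min_le_left _ _)⟩).le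
    have : min u T ≤ ts := le_csSup hbddA hcA
    exact absurd this (not_le.2 (lt_min hu htslt))
  intro t ht
  have := hhalf t (htseq ▸ ht)
  exact this.trans hltM.le
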